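/- Let k be a field and g an n×n matrix over O = k[X] with det g ≠ 0. Let g·Oⁿ denote the O-submodule of Oⁿ generated by the columns of g. Then the quotient Oⁿ/(g·Oⁿ) is a finite-dimensional k-vector space whose dimension equals the degree of det g. -/

import Mathlib

open Polynomial Module

set_option maxHeartbeats 1000000

private theorem aux_fin (k : Type*) [Field k] (p : k[X]) (hp : p ≠ 0) :
    Module.Finite k (k[X] ⧸ Ideal.span {p}) := by
  have : Module.Finite k (AdjoinRoot p) := (AdjoinRoot.powerBasis hp).finite
  exact this

private theorem aux_rank (k : Type*) [Field k] (p : k[X]) (hp : p ≠ 0) :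
    Module.finrank k (k[X] ⧸ Ideal.span {p}) = p.natDegree := by
  have := (AdjoinRoot.powerBasis hp).finrank
  exact this

theorem stmt3 (k : Type*) [Field k] (n : ℕ)
    (g : Matrix (Fin n) (Fin n) (Polynomial k)) (hg : g.det ≠ 0) :
    Module.Finite k ((Fin n → Polynomial k) ⧸ LinearMap.range g.mulVecLin) ∧
    Module.finrank k ((Fin n → Polynomial k) ⧸ LinearMap.range g.mulVecLin) =
      g.det.natDegree := by
  classical
  have hinj : Function.Injective g.mulVecLin := by
    rw [← LinearMap.ker_eq_bot, LinearMap.ker_eq_bot']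
    intro v hv
    have h1 : (g.adjugate * g).mulVec v = 0 := by
      rw [← Matrix.mulVec_mulVec]
      simpa using congrArg g.adjugate.mulVec hv
    rw [Matrix.adjugate_mul, Matrix.smul_mulVec, Matrix.one_mulVec] at h1
    funext i
    have := congrFun h1 i
    simp only [Pi.smul_apply, smul_eq_mul, Pi.zero_apply] at this ⊢
    exact (mul_eq_zero.mp this).resolve_left hg
  set b : Basis (Fin n) (Polynomial k) (Fin n → Polynomial k) :=
    Pi.basisFun (Polynomial k) (Fin n) with hb
  set N : Submodule (Polynomial k) (Fin n → Polynomial k) := LinearMap.range g.mulVecLin with hN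
  set e0 : (Fin n → Polynomial k) ≃ₗ[Polynomial k] N := LinearEquiv.ofInjective _ hinj with he0
  obtain ⟨m, snf⟩ := N.smithNormalForm b
  have hm : n = m := by
    have h1 : Module.finrank (Polynomial k) N = n := by
      rw [← e0.finrank_eq, Module.finrank_pi, Fintype.card_fin]
    have h2 : Module.finrank (Polynomial k) N = m := by
      rw [Module.finrank_eq_card_basis snf.bN, Fintype.card_fin]
    omega
  subst hm
  have hσbij : Function.Bijective snf.f := Finite.injective_iff_bijective.mp snf.f.injective
  set σ : Fin n ≃ Fin n := Equiv.ofBijective snf.f hσbij with hσ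
  have hσa : ∀ j, σ j = snf.f j := fun _ => rfl
  have hfs : ∀ i, snf.f (σ.symm i) = i := fun i => σ.apply_symm_apply i
  have ha : ∀ i, snf.a i ≠ 0 := by
    intro i h
    have h2 := snf.snf i
    rw [h, zero_smul] at h2
    exact snf.bN.ne_zero i (Subtype.coe_injective (by simpa using h2))
  -- determinant computation
  have hsplit : g.mulVecLin = N.subtype ∘ₗ (e0 : (Fin n → Polynomial k) →ₗ[Polynomial k] N) := by
    apply LinearMap.ext; intro x
    simp only [he0]
    rfl
  have hg_eq : g = LinearMap.toMatrix b b g.mulVecLin := by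
    rw [hb, LinearMap.toMatrix_eq_toMatrix', ← Matrix.toLin'_apply', LinearMap.toMatrix'_toLin']
  have hdet : g = LinearMap.toMatrix snf.bM b LinearMap.id *
      LinearMap.toMatrix snf.bN snf.bM N.subtype *
      LinearMap.toMatrix b snf.bN (e0 : (Fin n → Polynomial k) →ₗ[Polynomial k] N) := by
    conv_lhs => rw [hg_eq, hsplit]
    rw [LinearMap.toMatrix_comp b snf.bN b N.subtype (e0 : _ →ₗ[Polynomial k] N)]
    congr 1
    have h3 : (N.subtype : N →ₗ[Polynomial k] (Fin n → Polynomial k)) =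
        LinearMap.id.comp N.subtype := rfl
    conv_lhs => rw [h3]
    rw [LinearMap.toMatrix_comp snf.bN snf.bM b LinearMap.id N.subtype]
  have hP : IsUnit (LinearMap.toMatrix snf.bM b LinearMap.id).det := by
    apply IsUnit.of_mul_eq_one (LinearMap.toMatrix b snf.bM LinearMap.id).det
    rw [← Matrix.det_mul, ← LinearMap.toMatrix_comp b snf.bM b LinearMap.id LinearMap.id]
    simp [LinearMap.toMatrix_id]
  have hQ : IsUnit (LinearMap.toMatrix b snf.bN
      (e0 : (Fin n → Polynomial k) →ₗ[Polynomial k] N)).det := by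
    apply IsUnit.of_mul_eq_one
      (LinearMap.toMatrix snf.bN b (e0.symm : N →ₗ[Polynomial k] (Fin n → Polynomial k))).det
    rw [← Matrix.det_mul, ← LinearMap.toMatrix_comp snf.bN b snf.bN]
    have h4 : (e0 : (Fin n → Polynomial k) →ₗ[Polynomial k] N).comp
        (e0.symm : N →ₗ[Polynomial k] (Fin n → Polynomial k)) = LinearMap.id := by
      ext x; simp
    rw [h4]
    simp [LinearMap.toMatrix_id]
  have hD : LinearMap.toMatrix snf.bN snf.bM N.subtype =
      (Matrix.diagonal snf.a).submatrix σ.symm id := by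
    ext i j
    rw [LinearMap.toMatrix_apply]
    have h5 : (N.subtype (snf.bN j) : Fin n → Polynomial k) = snf.a j • snf.bM (snf.f j) :=
      snf.snf j
    rw [h5, map_smul]
    simp only [Basis.repr_self, Finsupp.smul_single, smul_eq_mul, mul_one,
      Finsupp.single_apply, Matrix.submatrix_apply, Matrix.diagonal_apply, id_eq]
    by_cases h : snf.f j = i
    · have h2 : σ.symm i = j := by rw [← h, ← hσa]; exact σ.symm_apply_apply j
      simp [h, h2]
    · have h2 : ¬ (σ.symm i = j) := fun hc => h (by rw [← hc, hfs])
      simp [h, h2]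
  have hdetD : (LinearMap.toMatrix snf.bN snf.bM N.subtype).det =
      ((Equiv.Perm.sign σ.symm : ℤ) : Polynomial k) * ∏ i, snf.a i := by
    rw [hD, Matrix.det_permute, Matrix.det_diagonal]
  have hprod_ne : (∏ i, snf.a i) ≠ 0 := Finset.prod_ne_zero_iff.mpr fun i _ => ha i
  have hsign : IsUnit ((Equiv.Perm.sign σ.symm : ℤ) : Polynomial k) :=
    (Equiv.Perm.sign σ.symm).isUnit.map (Int.castRingHom (Polynomial k))
  have key : g.det.natDegree = ∑ i, (snf.a i).natDegree := by
    have h1 : g.det = (LinearMap.toMatrix snf.bM b LinearMap.id).det *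
        (((Equiv.Perm.sign σ.symm : ℤ) : Polynomial k) * ∏ i, snf.a i) *
        (LinearMap.toMatrix b snf.bN
          (e0 : (Fin n → Polynomial k) →ₗ[Polynomial k] N)).det := by
      conv_lhs => rw [hdet]
      rw [Matrix.det_mul, Matrix.det_mul, hdetD]
    rw [h1,
      natDegree_mul (mul_ne_zero hP.ne_zero (mul_ne_zero hsign.ne_zero hprod_ne)) hQ.ne_zero,
      natDegree_mul hP.ne_zero (mul_ne_zero hsign.ne_zero hprod_ne),
      natDegree_mul hsign.ne_zero hprod_ne,
      natDegree_eq_zero_of_isUnit hP, natDegree_eq_zero_of_isUnit hQ,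
      natDegree_eq_zero_of_isUnit hsign, Polynomial.natDegree_prod _ _ (fun i _ => ha i)]
    simp
  -- quotient structure
  have hrepr : ∀ (c : Fin n → Polynomial k) (i : Fin n),
      snf.bM.repr (∑ j, c j • (snf.bN j : Fin n → Polynomial k)) i =
        c (σ.symm i) * snf.a (σ.symm i) := by
    intro c i
    have h6 : ∀ j, c j • (snf.bN j : Fin n → Polynomial k)
        = (c j * snf.a j) • snf.bM (snf.f j) := by
      intro j; rw [snf.snf j, smul_smul]
    simp only [h6]
    rw [map_sum, Finsupp.finset_sum_apply]
    rw [Finset.sum_eq_single (σ.symm i)]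
    · simp [hfs i]
    · intro j _ hj
      have : snf.f j ≠ i := fun hc => hj (by rw [← hc, ← hσa, Equiv.symm_apply_apply])
      simp [Finsupp.single_apply, this]
    · simp
  have mem_iff : ∀ x : Fin n → Polynomial k,
      x ∈ N ↔ ∀ i, snf.a (σ.symm i) ∣ snf.bM.repr x i := by
    intro x
    rw [snf.bN.mem_submodule_iff']
    constructor
    · rintro ⟨c, rfl⟩ i
      exact ⟨c (σ.symm i), by rw [hrepr, mul_comm]⟩
    · intro h
      choose c hc using h
      refine ⟨fun j => c (snf.f j), snf.bM.ext_elem fun i => ?_⟩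
      rw [hrepr, hfs i, hc i, mul_comm]
  set p' : Fin n → Submodule (Polynomial k) (Polynomial k) :=
    fun i => Ideal.span {snf.a (σ.symm i)} with hp'
  have hmap : N.map (snf.bM.equivFun : (Fin n → Polynomial k) →ₗ[Polynomial k]
      (Fin n → Polynomial k)) = Submodule.pi Set.univ p' := by
    ext x
    simp only [Submodule.mem_map, Submodule.mem_pi, Set.mem_univ, true_implies, hp',
      Ideal.mem_span_singleton, LinearEquiv.coe_coe, Basis.equivFun_apply]
    constructor
    · rintro ⟨y, hy, rfl⟩ i
      exact (mem_iff y).mp hy i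
    · intro hx
      refine ⟨∑ i, x i • snf.bM i, ?_, ?_⟩
      · rw [mem_iff]
        intro i
        rw [Basis.repr_sum_self]
        exact hx i
      · rw [Basis.repr_sum_self]
  have E : ((Fin n → Polynomial k) ⧸ N) ≃ₗ[k]
      ∀ i, Polynomial k ⧸ p' i :=
    ((Submodule.Quotient.equiv N (Submodule.pi Set.univ p') snf.bM.equivFun hmap).trans
      (Submodule.quotientPi p')).restrictScalars k
  have ha' : ∀ i, snf.a (σ.symm i) ≠ 0 := fun i => ha _
  haveI hfin : ∀ i, Module.Finite k (Polynomial k ⧸ p' i) := fun i => aux_fin k _ (ha' i)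
  haveI : Module.Finite k (∀ i, Polynomial k ⧸ p' i) := inferInstance
  constructor
  · exact Module.Finite.equiv E.symm
  · rw [E.finrank_eq, Module.finrank_pi_fintype, key]
    rw [← Equiv.sum_comp σ.symm fun i => (snf.a i).natDegree]
    exact Finset.sum_congr rfl fun i _ => aux_rank k _ (ha' i)
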